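/- The biloop function ψ: ℝ → ℝ², ψ(x) = (u(x), v(x)), where u(x) = c(1+cos(2π tanh(x/c)+π)) for x ≥ 0 and u(x) = -c(1+cos(2π tanh(x/c)-π)) for x < 0, and v(x) = sin(2π tanh(x/c)), with c > 0, is injective. -/
import Mathlib


open Real

private lemma tanh_strictMono' : StrictMono Real.tanh := by
  intro a b hab
  rw [Real.tanh_eq_sinh_div_cosh, Real.tanh_eq_sinh_div_cosh,
    div_lt_div_iff₀ (Real.cosh_pos a) (Real.cosh_pos b)]
  have h1 : Real.sinh (a - b) < 0 := Real.sinh_neg_iff.mpr (by linarith)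
  have h2 := Real.sinh_sub a b
  linarith

private lemma tanh_lt_one' (x : ℝ) : Real.tanh x < 1 := by
  rw [Real.tanh_eq_sinh_div_cosh, div_lt_one (Real.cosh_pos x)]
  have h := Real.cosh_sub_sinh x
  have := Real.exp_pos (-x)
  linarith

private lemma neg_one_lt_tanh' (x : ℝ) : -1 < Real.tanh x := by
  rw [Real.tanh_eq_sinh_div_cosh, lt_div_iff₀ (Real.cosh_pos x)]
  have h := Real.cosh_add_sinh x
  have := Real.exp_pos x
  linarith

private lemma key_inj (a b : ℝ) (hcos : Real.cos (2 * π * a) = Real.cos (2 * π * b))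
    (hsin : Real.sin (2 * π * a) = Real.sin (2 * π * b)) (hab : |a - b| < 1) : a = b := by
  have h := Real.Angle.cos_sin_inj hcos hsin
  rw [Real.Angle.angle_eq_iff_two_pi_dvd_sub] at h
  obtain ⟨k, hk⟩ := h
  have hπ : (2 * π : ℝ) ≠ 0 := by positivity
  have hk' : a - b = (k : ℝ) :=
    mul_left_cancel₀ hπ (by linarith [hk] : 2 * π * (a - b) = 2 * π * (k : ℝ))
  rw [hk'] at hab
  have h1 : -1 < (k : ℝ) := by cases abs_lt.mp hab; linarith
  have h2 : (k : ℝ) < 1 := (abs_lt.mp hab).2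
  have : k = 0 := by
    have h1' : -1 < k := by exact_mod_cast h1
    have h2' : k < 1 := by exact_mod_cast h2
    omega
  rw [this] at hk'
  push_cast at hk'
  linarith

/-- The biloop function `ψ : ℝ → ℝ²` is injective. -/
theorem stmt12 (c : ℝ) (hc : 0 < c) :
    Function.Injective (fun x : ℝ =>
      ((if 0 ≤ x then c * (1 + Real.cos (2 * π * Real.tanh (x / c) + π))
        else -c * (1 + Real.cos (2 * π * Real.tanh (x / c) - π))),
       Real.sin (2 * π * Real.tanh (x / c)))) := by
  have hπ := Real.pi_pos
  intro x y h
  simp only [Prod.mk.injEq] at h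
  obtain ⟨h1, h2⟩ := h
  set a := Real.tanh (x / c) with ha
  set b := Real.tanh (y / c) with hb
  have ha1 : a < 1 := tanh_lt_one' _
  have ha2 : -1 < a := neg_one_lt_tanh' _
  have hb1 : b < 1 := tanh_lt_one' _
  have hb2 : -1 < b := neg_one_lt_tanh' _
  have keysign : ∀ t : ℝ, 0 ≤ Real.tanh t ↔ 0 ≤ t := by
    intro t
    constructor
    · intro h
      by_contra hn
      push_neg at hn
      have := tanh_strictMono' hn
      rw [Real.tanh_zero] at this
      linarith
    · intro h
      have := tanh_strictMono'.monotone h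
      rwa [Real.tanh_zero] at this
  have hxa : 0 ≤ x ↔ 0 ≤ a := by
    rw [ha, keysign, le_div_iff₀ hc, zero_mul]
  have hyb : 0 ≤ y ↔ 0 ≤ b := by
    rw [hb, keysign, le_div_iff₀ hc, zero_mul]
  have finish : a = b → x = y := by
    intro hab
    have := tanh_strictMono'.injective (ha ▸ hb ▸ hab)
    field_simp at this
    exact this
  have hca : Real.cos (2 * π * a) ≤ 1 := Real.cos_le_one _
  have hcb : Real.cos (2 * π * b) ≤ 1 := Real.cos_le_one _
  by_cases hx : 0 ≤ x <;> by_cases hy : 0 ≤ y <;>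
    simp only [hx, hy, if_pos, if_neg, if_true, if_false] at h1
  · -- both nonneg
    have hcos : Real.cos (2 * π * a) = Real.cos (2 * π * b) := by
      rw [Real.cos_add_pi, Real.cos_add_pi] at h1
      have := mul_left_cancel₀ hc.ne' h1
      linarith
    have h0a : 0 ≤ a := hxa.mp hx
    have h0b : 0 ≤ b := hyb.mp hy
    exact finish (key_inj a b hcos h2 (abs_lt.mpr ⟨by linarith, by linarith⟩))
  · -- x ≥ 0, y < 0
    rw [Real.cos_add_pi, Real.cos_sub_pi] at h1
    have hL : 0 ≤ c * (1 + -Real.cos (2 * π * a)) := by nlinarith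
    have hR : -c * (1 + -Real.cos (2 * π * b)) ≤ 0 := by nlinarith
    have hL0 : c * (1 + -Real.cos (2 * π * a)) = 0 := le_antisymm (h1 ▸ hR) hL
    have hR0 : -c * (1 + -Real.cos (2 * π * b)) = 0 := h1 ▸ hL0
    have hca1 : Real.cos (2 * π * a) = 1 := by
      have := mul_eq_zero.mp hL0
      rcases this with h | h
      · exact absurd h hc.ne'
      · linarith
    have hcb1 : Real.cos (2 * π * b) = 1 := by
      have := mul_eq_zero.mp hR0
      rcases this with h | h
      · have : c = 0 := by linarith [neg_eq_zero.mp h]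
        exact absurd this hc.ne'
      · linarith
    have haz : a = 0 := by
      have := (Real.cos_eq_one_iff_of_lt_of_lt
        (by nlinarith : -(2 * π) < 2 * π * a) (by nlinarith : 2 * π * a < 2 * π)).mp hca1
      have hpa : π * a = 0 := by linarith
      rcases mul_eq_zero.mp hpa with h | h
      · linarith
      · exact h
    have hbz : b = 0 := by
      have := (Real.cos_eq_one_iff_of_lt_of_lt
        (by nlinarith : -(2 * π) < 2 * π * b) (by nlinarith : 2 * π * b < 2 * π)).mp hcb1
      have hpa : π * b = 0 := by linarith
      rcases mul_eq_zero.mp hpa with h | h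
      · linarith
      · exact h
    exact absurd (hyb.mpr (le_of_eq hbz.symm)) hy
  · -- x < 0, y ≥ 0 : symmetric
    rw [Real.cos_sub_pi, Real.cos_add_pi] at h1
    have hL : -c * (1 + -Real.cos (2 * π * a)) ≤ 0 := by nlinarith
    have hR : 0 ≤ c * (1 + -Real.cos (2 * π * b)) := by nlinarith
    have hL0 : -c * (1 + -Real.cos (2 * π * a)) = 0 := le_antisymm hL (h1 ▸ hR)
    have hca1 : Real.cos (2 * π * a) = 1 := by
      have := mul_eq_zero.mp hL0
      rcases this with h | h
      · have : c = 0 := by linarith [neg_eq_zero.mp h]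
        exact absurd this hc.ne'
      · linarith
    have haz : a = 0 := by
      have := (Real.cos_eq_one_iff_of_lt_of_lt
        (by nlinarith : -(2 * π) < 2 * π * a) (by nlinarith : 2 * π * a < 2 * π)).mp hca1
      have hpa : π * a = 0 := by linarith
      rcases mul_eq_zero.mp hpa with h | h
      · linarith
      · exact h
    exact absurd (hxa.mpr (le_of_eq haz.symm)) hx
  · -- both negative
    have hcos : Real.cos (2 * π * a) = Real.cos (2 * π * b) := by
      rw [Real.cos_sub_pi, Real.cos_sub_pi] at h1
      have := mul_left_cancel₀ (neg_ne_zero.mpr hc.ne') h1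
      linarith
    have h0a : a ≤ 0 := le_of_not_ge (fun hh => hx (hxa.mpr hh))
    have h0b : b ≤ 0 := le_of_not_ge (fun hh => hy (hyb.mpr hh))
    exact finish (key_inj a b hcos h2 (abs_lt.mpr ⟨by linarith, by linarith⟩))
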